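/- Let A be a constant symmetric 3×3 real matrix, let S : ℝ → ℝ³ be differentiable, set S̃(x) := A·S(x) (matrix-vector product) and F(x) := (1/2)·⟨S(x), S̃(x)⟩ (half the Euclidean inner product). Then for every x, S̃ × (S × S′) + S × (S̃ × S̃′) = F′·(S + S̃) − 2F·(S + S̃)′, where × is the standard cross product on ℝ³ and ′ is the derivative in x. (This identity shows that the nonlocal term M₀ of the deformed Heisenberg ferromagnet model is a total x-derivative combination.) -/

import Mathlib

open Matrix

/-- For `S̃ = A·S` with `A` constant symmetric and `F = (1/2)⟨S, S̃⟩`, the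
identity `S̃ × (S × S′) + S × (S̃ × S̃′) = F′·(S + S̃) − 2F·(S + S̃)′` holds:
the nonlocal term `M₀` of the deformed Heisenberg ferromagnet model is a total
`x`-derivative combination. -/
theorem ferromagnet_M0_total_derivative
    (A : Matrix (Fin 3) (Fin 3) ℝ) (hA : Aᵀ = A)
    (S St : ℝ → Fin 3 → ℝ) (F : ℝ → ℝ)
    (hS : Differentiable ℝ S)
    (hSt : ∀ x : ℝ, St x = A.mulVec (S x))
    (hF : ∀ x : ℝ, F x = (1 / 2) * (S x ⬝ᵥ St x)) :
    ∀ x : ℝ,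
      crossProduct (St x) (crossProduct (S x) (deriv S x)) +
          crossProduct (S x) (crossProduct (St x) (deriv St x)) =
        deriv F x • (S x + St x) - (2 * F x) • deriv (fun y => S y + St y) x := by
  intro x
  have hS' : HasDerivAt S (deriv S x) x := (hS x).hasDerivAt
  set S' := deriv S x with hS'def
  have hStfun : St = fun y => A.mulVec (S y) := funext hSt
  have hSt' : HasDerivAt St (A.mulVec S') x := by
    rw [hStfun]
    have := (LinearMap.toContinuousLinearMap A.mulVecLin).hasFDerivAt.comp_hasDerivAt x hS'
    simpa [Function.comp_def] using this
  have hp : ∀ i, HasDerivAt (fun y => S y i) (S' i) x := fun i => (hasDerivAt_pi.1 hS') i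
  have hq : ∀ i, HasDerivAt (fun y => St y i) (A.mulVec S' i) x := fun i => (hasDerivAt_pi.1 hSt') i
  have hFd : HasDerivAt F ((1/2) * (S' ⬝ᵥ St x + S x ⬝ᵥ A.mulVec S')) x := by
    have h1 : HasDerivAt (fun y => S y ⬝ᵥ St y) (S' ⬝ᵥ St x + S x ⬝ᵥ A.mulVec S') x := by
      have := HasDerivAt.fun_sum (u := Finset.univ)
        (fun i _ => (hp i).mul (hq i))
      simpa [dotProduct, Finset.sum_add_distrib] using this
    have := h1.const_mul (1/2 : ℝ)
    simpa [funext hF] using this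
  have hsum : HasDerivAt (fun y => S y + St y) (S' + A.mulVec S') x := hS'.add hSt'
  rw [hFd.deriv, hSt'.deriv, hsum.deriv, hF x, hSt x]
  have hsym : ∀ i j, A i j = A j i := fun i j => by
    simpa using congrFun (congrFun hA j) i
  have h10 := hsym 1 0
  have h20 := hsym 2 0
  have h21 := hsym 2 1
  funext i
  fin_cases i <;>
    simp [cross_apply, Matrix.mulVec, dotProduct, Fin.sum_univ_three, h10, h20, h21] <;>
    ring
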